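/- Let n ≥ 1 and T ≥ n be integers, let U, Y be real data sequences of length T+1, let σ ∈ ℂ, and suppose the linear system H_n(U)·ξ = γ_n(σ), H_n(Y)·ξ = M·γ_n(σ) has at least one solution (ξ, M) ∈ ℂ^{T−n+1} × ℂ. Then any two solutions (ξ₁, M₁) and (ξ₂, M₂) of this system satisfy M₁ = M₂ if and only if rank [H_n(U), 0; H_n(Y), γ_n(σ)] = rank [H_n(U); H_n(Y)] + 1, where ranks are of complex matrices. -/

import Mathlib

open Matrix

/-- The Hankel matrix of depth `n` (over `ℂ`) of a real data sequence `u = (u 0, …, u T)`: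
its `(i,j)` entry is `u (i+j)`. -/
noncomputable def hankelC (u : ℕ → ℝ) (n T : ℕ) : Matrix (Fin (n + 1)) (Fin (T - n + 1)) ℂ :=
  fun i j => (u ((i : ℕ) + (j : ℕ)) : ℂ)

/-- `γ_n(σ) = (1, σ, …, σ^n)ᵀ`. -/
noncomputable def gammaVec (n : ℕ) (σ : ℂ) : Fin (n + 1) → ℂ :=
  fun i => σ ^ (i : ℕ)

/-- A parameter row vector `θ = [q, -p] ∈ ℝ^{2n+1}` belongs to `Σ_{U,Y}`, i.e.
`[q -p]·[H_n(U); H̄_n(Y)] = [y_n ⋯ y_T]`. -/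
def inSigmaUY (n T : ℕ) (u y : ℕ → ℝ) (θ : Fin (2 * n + 1) → ℝ) : Prop :=
  ∀ j : Fin (T - n + 1),
    (∑ i : Fin (2 * n + 1),
      θ i * (if (i : ℕ) < n + 1 then u ((i : ℕ) + (j : ℕ))
             else y ((i : ℕ) - (n + 1) + (j : ℕ)))) = y (n + (j : ℕ))

/-- A parameter row vector `θ = [q, -p] ∈ ℝ^{2n+1}` belongs to `Σ_{σ,M}`, i.e.
`[q -p]·[γ_n(σ); M·γ_{n-1}(σ)] = M·σ^n`. -/
def inSigmaM (n : ℕ) (σ M : ℂ) (θ : Fin (2 * n + 1) → ℝ) : Prop :=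
  (∑ i : Fin (2 * n + 1),
    (θ i : ℂ) * (if (i : ℕ) < n + 1 then σ ^ (i : ℕ)
                 else M * σ ^ ((i : ℕ) - (n + 1)))) = M * σ ^ n

/-- The stacked matrix `[H_n(U); H_n(Y)]` over `ℂ`. -/
noncomputable def stackUY (u y : ℕ → ℝ) (n T : ℕ) :
    Matrix (Fin (n + 1) ⊕ Fin (n + 1)) (Fin (T - n + 1)) ℂ :=
  Matrix.fromRows (hankelC u n T) (hankelC y n T)

/-- The column `(0; γ_n(σ))`. -/
noncomputable def colZeroGamma (n : ℕ) (σ : ℂ) :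
    Matrix (Fin (n + 1) ⊕ Fin (n + 1)) (Fin 1) ℂ :=
  Matrix.of fun i _ => Sum.elim (fun _ : Fin (n + 1) => (0 : ℂ)) (fun k : Fin (n + 1) => σ ^ (k : ℕ)) i

/-- The column `(γ_n(σ); 0)`. -/
noncomputable def colGammaZero (n : ℕ) (σ : ℂ) :
    Matrix (Fin (n + 1) ⊕ Fin (n + 1)) (Fin 1) ℂ :=
  Matrix.of fun i _ => Sum.elim (fun k : Fin (n + 1) => σ ^ (k : ℕ)) (fun _ : Fin (n + 1) => (0 : ℂ)) i

/-- Given at least one solution `(ξ, M)` of the linear system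
`H_n(U)·ξ = γ_n(σ)`, `H_n(Y)·ξ = M·γ_n(σ)`, all solutions share the same `M`-component
iff `rank [H_n(U), 0; H_n(Y), γ_n(σ)] = rank [H_n(U); H_n(Y)] + 1`. -/
theorem unique_M_iff_rank_condition (n T : ℕ) (hn : 1 ≤ n) (hT : n ≤ T)
    (u y : ℕ → ℝ) (σ : ℂ)
    (hsol : ∃ (ξ : Fin (T - n + 1) → ℂ) (M : ℂ),
        (hankelC u n T).mulVec ξ = gammaVec n σ ∧
        (hankelC y n T).mulVec ξ = M • gammaVec n σ) :
    (∀ (ξ₁ ξ₂ : Fin (T - n + 1) → ℂ) (M₁ M₂ : ℂ),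
        (hankelC u n T).mulVec ξ₁ = gammaVec n σ →
        (hankelC y n T).mulVec ξ₁ = M₁ • gammaVec n σ →
        (hankelC u n T).mulVec ξ₂ = gammaVec n σ →
        (hankelC y n T).mulVec ξ₂ = M₂ • gammaVec n σ →
        M₁ = M₂) ↔
      (Matrix.fromCols (stackUY u y n T) (colZeroGamma n σ)).rank =
        (stackUY u y n T).rank + 1 := by
  classical
  set A := stackUY u y n T with hA
  set cvec : (Fin (n+1) ⊕ Fin (n+1)) → ℂ := Sum.elim 0 (gammaVec n σ) with hc
  have hcol : ∀ w : Fin 1 → ℂ, (colZeroGamma n σ) *ᵥ w = w 0 • cvec := by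
    intro w
    funext i
    cases i with
    | inl i => simp [colZeroGamma, mulVec, dotProduct, hc, Fin.sum_univ_one]
    | inr i => simp [colZeroGamma, mulVec, dotProduct, hc, Fin.sum_univ_one, gammaVec, mul_comm]
  have hcne : cvec ≠ 0 := by
    intro h
    have := congrFun h (Sum.inr 0)
    simp [hc, gammaVec] at this
  have hmem_iff : cvec ∈ LinearMap.range A.mulVecLin ↔
      ∃ η : Fin (T - n + 1) → ℂ,
        (hankelC u n T) *ᵥ η = 0 ∧ (hankelC y n T) *ᵥ η = gammaVec n σ := by
    constructor
    · rintro ⟨η, hη⟩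
      rw [mulVecLin_apply, hA, stackUY, fromRows_mulVec] at hη
      refine ⟨η, funext fun i => ?_, funext fun i => ?_⟩
      · simpa [hc] using congrFun hη (Sum.inl i)
      · simpa [hc] using congrFun hη (Sum.inr i)
    · rintro ⟨η, h1, h2⟩
      refine ⟨η, ?_⟩
      rw [mulVecLin_apply, hA, stackUY, fromRows_mulVec, h1, h2]
  -- left side iff cvec not in range
  have hleft : (∀ (ξ₁ ξ₂ : Fin (T - n + 1) → ℂ) (M₁ M₂ : ℂ),
        (hankelC u n T).mulVec ξ₁ = gammaVec n σ →
        (hankelC y n T).mulVec ξ₁ = M₁ • gammaVec n σ →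
        (hankelC u n T).mulVec ξ₂ = gammaVec n σ →
        (hankelC y n T).mulVec ξ₂ = M₂ • gammaVec n σ →
        M₁ = M₂) ↔ cvec ∉ LinearMap.range A.mulVecLin := by
    rw [hmem_iff]
    constructor
    · rintro huniq ⟨η, h1, h2⟩
      obtain ⟨ξ, M, hu1, hy1⟩ := hsol
      have hu2 : (hankelC u n T) *ᵥ (ξ + η) = gammaVec n σ := by
        rw [mulVec_add, hu1, h1, add_zero]
      have hy2 : (hankelC y n T) *ᵥ (ξ + η) = (M + 1) • gammaVec n σ := by
        rw [mulVec_add, hy1, h2, add_smul, one_smul]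
      have := huniq ξ (ξ + η) M (M + 1) hu1 hy1 hu2 hy2
      simpa using this
    · intro hno ξ₁ ξ₂ M₁ M₂ hu1 hy1 hu2 hy2
      by_contra hne
      have hd : M₁ - M₂ ≠ 0 := sub_ne_zero.mpr hne
      refine hno ⟨(M₁ - M₂)⁻¹ • (ξ₁ - ξ₂), ?_, ?_⟩
      · rw [mulVec_smul, mulVec_sub, hu1, hu2, sub_self, smul_zero]
      · rw [mulVec_smul, mulVec_sub, hy1, hy2, ← sub_smul, smul_smul,
          inv_mul_cancel₀ hd, one_smul]
  rw [hleft]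
  -- range of fromColumns
  have hrange : LinearMap.range (fromCols A (colZeroGamma n σ)).mulVecLin
      = LinearMap.range A.mulVecLin ⊔ Submodule.span ℂ {cvec} := by
    apply le_antisymm
    · rintro _ ⟨v, rfl⟩
      rw [mulVecLin_apply]
      have hv : v = Sum.elim (v ∘ Sum.inl) (v ∘ Sum.inr) := by
        funext i; cases i <;> rfl
      rw [hv, fromCols_mulVec_sumElim, hcol]
      exact Submodule.add_mem_sup ⟨_, rfl⟩
        (Submodule.smul_mem _ _ (Submodule.mem_span_singleton_self _))
    · rw [sup_le_iff]
      constructor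
      · rintro _ ⟨v, rfl⟩
        exact ⟨Sum.elim v 0, by
          rw [mulVecLin_apply, fromCols_mulVec_sumElim, hcol]; simp⟩
      · rw [Submodule.span_le, Set.singleton_subset_iff]
        exact ⟨Sum.elim 0 1, by
          rw [mulVecLin_apply, fromCols_mulVec_sumElim, hcol]
          simp [Matrix.mulVec_zero]⟩
  by_cases hin : cvec ∈ LinearMap.range A.mulVecLin
  · have hsup : LinearMap.range A.mulVecLin ⊔ Submodule.span ℂ {cvec}
        = LinearMap.range A.mulVecLin :=
      sup_eq_left.mpr (by rwa [Submodule.span_singleton_le_iff_mem])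
    refine iff_of_false (fun h => h hin) ?_
    rw [Matrix.rank, hrange, hsup]
    have hAr : A.rank = Module.finrank ℂ (LinearMap.range A.mulVecLin) := rfl
    rw [hAr]
    omega
  · simp only [hin, not_false_iff, true_iff]
    rw [Matrix.rank, hrange]
    have hinf : LinearMap.range A.mulVecLin ⊓ Submodule.span ℂ {cvec} = ⊥ := by
      rw [eq_bot_iff]
      intro x hx
      obtain ⟨hx1, hx2⟩ := Submodule.mem_inf.mp hx
      obtain ⟨a, rfl⟩ := Submodule.mem_span_singleton.mp hx2
      rcases eq_or_ne a 0 with rfl | ha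
      · simp
      · exact absurd ((Submodule.smul_mem_iff _ ha).mp hx1) hin
    have := Submodule.finrank_sup_add_finrank_inf_eq
      (LinearMap.range A.mulVecLin) (Submodule.span ℂ {cvec})
    rw [hinf, finrank_bot, add_zero, finrank_span_singleton hcne] at this
    rw [this]
    rfl
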